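/- There is a k-algebra isomorphism from the Rees algebra R[It] ⊆ R[t] onto the monomial subring k[C(G)] ⊆ R[z], namely the restriction of the homomorphism φ : R[t] → R[z, z^{-1}] defined by φ(x_i) = x_i z, φ(y_j) = y_j z, φ(t) = z^{-2}. -/

import Mathlib

open MvPolynomial

/-- The edge ideal `I(G) ⊆ R = k[x_1,…,x_n,y_1,…,y_m]` of the bipartite graph whose edges
are given by `edge : E → Fin n × Fin m`. -/
noncomputable def edgeIdeal (k : Type*) [CommSemiring k] (n m : ℕ) {E : Type*}
    (edge : E → Fin n × Fin m) : Ideal (MvPolynomial (Sum (Fin n) (Fin m)) k) :=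
  Ideal.span (Set.range fun e : E => X (Sum.inl (edge e).1) * X (Sum.inr (edge e).2))

/-- The `k`-algebra map `φ : R[t] → R[z,z⁻¹]` with `φ(x_i) = x_i z`, `φ(y_j) = y_j z`
and `φ(t) = z⁻²`. -/
noncomputable def laurentPhi (k : Type*) [CommRing k] (n m : ℕ) :
    Polynomial (MvPolynomial (Sum (Fin n) (Fin m)) k) →ₐ[k]
      LaurentPolynomial (MvPolynomial (Sum (Fin n) (Fin m)) k) :=
  Polynomial.eval₂AlgHom
    (aeval fun v : Sum (Fin n) (Fin m) =>
      LaurentPolynomial.C (X v) * LaurentPolynomial.T 1)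
    (LaurentPolynomial.T (-2)) (fun _ => Commute.all _ _)

/-- The canonical embedding `R[z] → R[z,z⁻¹]` (sending each `x_i, y_j` to itself and the
polynomial variable `z` to `z`). -/
noncomputable def laurentIota (k : Type*) [CommRing k] (n m : ℕ) :
    Polynomial (MvPolynomial (Sum (Fin n) (Fin m)) k) →ₐ[k]
      LaurentPolynomial (MvPolynomial (Sum (Fin n) (Fin m)) k) :=
  Polynomial.eval₂AlgHom
    (aeval fun v : Sum (Fin n) (Fin m) => LaurentPolynomial.C (X v))
    (LaurentPolynomial.T 1) (fun _ => Commute.all _ _)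

/-- The monomial subring `k[C(G)] ⊆ R[z]` of the cone graph `C(G)`: the `k`-subalgebra
generated by the monomials `x_i y_j` over the edges `{x_i,y_j}` of `G` together with
`x_i z` (1 ≤ i ≤ n) and `y_j z` (1 ≤ j ≤ m). -/
noncomputable def coneMonomialSubring (k : Type*) [CommRing k] (n m : ℕ) {E : Type*}
    (edge : E → Fin n × Fin m) :
    Subalgebra k (Polynomial (MvPolynomial (Sum (Fin n) (Fin m)) k)) :=
  Algebra.adjoin k
    ({p | ∃ e : E, p = Polynomial.C (X (Sum.inl (edge e).1) * X (Sum.inr (edge e).2))} ∪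
      Set.range fun v : Sum (Fin n) (Fin m) => Polynomial.C (X v) * Polynomial.X)

/-! ### Auxiliary material -/

section InjAux

variable (k : Type*) [CommRing k] (n m : ℕ)

/-- A ring-hom retraction device: on coefficients it repeats `x ↦ x z`, while `T x ↦ T (-x)`. -/
noncomputable def psiAux :
    LaurentPolynomial (MvPolynomial (Sum (Fin n) (Fin m)) k) →+*
      LaurentPolynomial (MvPolynomial (Sum (Fin n) (Fin m)) k) :=
  AddMonoidAlgebra.liftNCRingHom
    ((aeval fun v : Sum (Fin n) (Fin m) =>
        LaurentPolynomial.C (X v) * LaurentPolynomial.T 1) :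
      MvPolynomial (Sum (Fin n) (Fin m)) k →ₐ[k] _).toRingHom
    { toFun := fun u => LaurentPolynomial.T (-(Multiplicative.toAdd u))
      map_one' := by simp
      map_mul' := fun a b => by
        show LaurentPolynomial.T (-(Multiplicative.toAdd a + Multiplicative.toAdd b)) = _
        rw [neg_add, LaurentPolynomial.T_add] }
    (fun _ _ => Commute.all _ _)

lemma psiAux_single (x : ℤ) (r : MvPolynomial (Sum (Fin n) (Fin m)) k) :
    psiAux k n m (AddMonoidAlgebra.single x r) =
      aeval (fun v : Sum (Fin n) (Fin m) =>
        LaurentPolynomial.C (X v) * LaurentPolynomial.T 1) r *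
        LaurentPolynomial.T (-x) :=
  AddMonoidAlgebra.liftNC_single _ _ _ _

lemma psiAux_C (r : MvPolynomial (Sum (Fin n) (Fin m)) k) :
    psiAux k n m (LaurentPolynomial.C r) =
      aeval (fun v : Sum (Fin n) (Fin m) =>
        LaurentPolynomial.C (X v) * LaurentPolynomial.T 1) r := by
  rw [← LaurentPolynomial.single_eq_C, psiAux_single]
  simp

lemma psiAux_T (x : ℤ) :
    psiAux k n m (LaurentPolynomial.T x) = LaurentPolynomial.T (-x) := by
  rw [LaurentPolynomial.T, psiAux_single]
  simp

lemma key_comp :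
    (psiAux k n m).comp (laurentPhi k n m).toRingHom =
      (Polynomial.toLaurent).comp (Polynomial.expand _ 2).toRingHom := by
  apply Polynomial.ringHom_ext
  · intro a
    simp only [RingHom.coe_comp, Function.comp_apply, AlgHom.toRingHom_eq_coe,
      RingHom.coe_coe, laurentPhi, Polynomial.eval₂AlgHom_apply, Polynomial.eval₂_C,
      Polynomial.expand_C, Polynomial.toLaurent_C]
    have : (psiAux k n m).comp ((aeval fun v : Sum (Fin n) (Fin m) =>
        LaurentPolynomial.C (X v) * LaurentPolynomial.T 1) :
          MvPolynomial (Sum (Fin n) (Fin m)) k →ₐ[k] _).toRingHom =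
        LaurentPolynomial.C := by
      apply MvPolynomial.ringHom_ext
      · intro c
        simp [LaurentPolynomial.algebraMap_apply, psiAux_C, MvPolynomial.algebraMap_eq]
      · intro v
        simp only [RingHom.coe_comp, Function.comp_apply, AlgHom.toRingHom_eq_coe,
          RingHom.coe_coe, aeval_X, map_mul, psiAux_C, psiAux_T, aeval_X]
        rw [mul_assoc, ← LaurentPolynomial.T_add]
        simp
    exact RingHom.congr_fun this a
  · simp only [RingHom.coe_comp, Function.comp_apply, AlgHom.toRingHom_eq_coe,
      RingHom.coe_coe, laurentPhi, Polynomial.eval₂AlgHom_apply, Polynomial.eval₂_X,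
      Polynomial.expand_X, Polynomial.toLaurent_X_pow, psiAux_T]
    norm_num

lemma laurentPhi_injective : Function.Injective (laurentPhi k n m) := by
  intro a b h
  have h1 := congrArg (psiAux k n m) h
  have ka := RingHom.congr_fun (key_comp k n m) a
  have kb := RingHom.congr_fun (key_comp k n m) b
  simp only [RingHom.coe_comp, Function.comp_apply, AlgHom.toRingHom_eq_coe,
    RingHom.coe_coe] at ka kb
  have h2 : Polynomial.toLaurent (Polynomial.expand _ 2 a) =
      Polynomial.toLaurent (Polynomial.expand _ 2 b) := by rw [← ka, ← kb]; exact h1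
  exact Polynomial.expand_injective (by norm_num) (Polynomial.toLaurent_injective h2)

end InjAux

section AdjoinAux

variable (k : Type*) [CommRing k] (n m : ℕ) {E : Type*} (edge : E → Fin n × Fin m)

/-- generating set of the Rees algebra as a `k`-algebra -/
def reesGens : Set (Polynomial (MvPolynomial (Sum (Fin n) (Fin m)) k)) :=
  (Set.range fun v : Sum (Fin n) (Fin m) => Polynomial.C (X v)) ∪
    Set.range fun e : E =>
      Polynomial.C (X (Sum.inl (edge e).1) * X (Sum.inr (edge e).2)) * Polynomial.X

lemma C_mem_reesGens_adjoin (r : MvPolynomial (Sum (Fin n) (Fin m)) k) :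
    Polynomial.C r ∈ Algebra.adjoin k (reesGens k n m edge) := by
  induction r using MvPolynomial.induction_on with
  | C a =>
      rw [← MvPolynomial.algebraMap_eq, ← Polynomial.algebraMap_apply]
      exact Subalgebra.algebraMap_mem _ _
  | add p q hp hq => rw [map_add]; exact add_mem hp hq
  | mul_X p v hp =>
      rw [map_mul]
      exact mul_mem hp (Algebra.subset_adjoin (Or.inl ⟨v, rfl⟩))

lemma monomial_one_mem_reesGens_adjoin {a : MvPolynomial (Sum (Fin n) (Fin m)) k}
    (ha : a ∈ edgeIdeal k n m edge) :
    Polynomial.monomial 1 a ∈ Algebra.adjoin k (reesGens k n m edge) := by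
  refine Submodule.span_induction ?_ ?_ ?_ ?_ ha
  · rintro x ⟨e, rfl⟩
    rw [← Polynomial.C_mul_X_eq_monomial]
    exact Algebra.subset_adjoin (Or.inr ⟨e, rfl⟩)
  · rw [map_zero]; exact zero_mem _
  · intro x y _ _ hx hy
    rw [map_add]; exact add_mem hx hy
  · intro r x _ hx
    rw [smul_eq_mul, ← Polynomial.C_mul_monomial]
    exact mul_mem (C_mem_reesGens_adjoin k n m edge r) hx

lemma monomial_mem_reesGens_adjoin {i : ℕ} {r : MvPolynomial (Sum (Fin n) (Fin m)) k}
    (hr : r ∈ edgeIdeal k n m edge ^ i) :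
    Polynomial.monomial i r ∈ Algebra.adjoin k (reesGens k n m edge) := by
  induction i generalizing r with
  | zero =>
      rw [Polynomial.monomial_zero_left]
      exact C_mem_reesGens_adjoin k n m edge r
  | succ i ih =>
      rw [pow_succ'] at hr
      refine Submodule.mul_induction_on hr ?_ ?_
      · intro a ha b hb
        have : (Polynomial.monomial (i + 1)) (a * b) =
            Polynomial.monomial 1 a * Polynomial.monomial i b := by
          rw [Polynomial.monomial_mul_monomial, add_comm]
        rw [this]
        exact mul_mem (monomial_one_mem_reesGens_adjoin k n m edge ha) (ih hb)
      · intro x y hx hy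
        rw [map_add]; exact add_mem hx hy

lemma restrictScalars_rees_eq :
    Subalgebra.restrictScalars k (reesAlgebra (edgeIdeal k n m edge)) =
      Algebra.adjoin k (reesGens k n m edge) := by
  apply le_antisymm
  · intro p hp
    have hp' : ∀ i, p.coeff i ∈ edgeIdeal k n m edge ^ i := hp
    rw [p.as_sum_support]
    exact Subalgebra.sum_mem _ fun i _ => monomial_mem_reesGens_adjoin k n m edge (hp' i)
  · rw [Algebra.adjoin_le_iff]
    rintro x (⟨v, rfl⟩ | ⟨e, rfl⟩)
    · show Polynomial.C (X v) ∈ reesAlgebra (edgeIdeal k n m edge)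
      rw [← Polynomial.algebraMap_eq]
      exact Subalgebra.algebraMap_mem _ _
    · show Polynomial.C (X (Sum.inl (edge e).1) * X (Sum.inr (edge e).2)) * Polynomial.X ∈
        reesAlgebra (edgeIdeal k n m edge)
      rw [Polynomial.C_mul_X_eq_monomial, reesAlgebra.monomial_mem, pow_one]
      exact Ideal.subset_span ⟨e, rfl⟩

end AdjoinAux

section MapAux

variable (k : Type*) [CommRing k] (n m : ℕ)

lemma laurentPhi_C (r : MvPolynomial (Sum (Fin n) (Fin m)) k) :
    laurentPhi k n m (Polynomial.C r) =
      aeval (fun v : Sum (Fin n) (Fin m) =>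
        LaurentPolynomial.C (X v) * LaurentPolynomial.T 1) r := by
  simp [laurentPhi]

lemma laurentPhi_X :
    laurentPhi k n m Polynomial.X = LaurentPolynomial.T (-2) := by
  simp [laurentPhi]

lemma aeval_laurentC (r : MvPolynomial (Sum (Fin n) (Fin m)) k) :
    aeval (fun v : Sum (Fin n) (Fin m) => LaurentPolynomial.C (X v)) r =
      LaurentPolynomial.C r := by
  induction r using MvPolynomial.induction_on with
  | C a => simp [LaurentPolynomial.algebraMap_apply, MvPolynomial.algebraMap_eq]
  | add p q hp hq => rw [map_add, map_add, hp, hq]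
  | mul_X p v hp => rw [map_mul, map_mul, hp]; simp

lemma laurentIota_C (r : MvPolynomial (Sum (Fin n) (Fin m)) k) :
    laurentIota k n m (Polynomial.C r) = LaurentPolynomial.C r := by
  simp [laurentIota, aeval_laurentC]

lemma laurentIota_X :
    laurentIota k n m Polynomial.X = LaurentPolynomial.T 1 := by
  simp [laurentIota]

end MapAux

theorem reesAlgebra_isom_coneMonomialSubring (k : Type*) [Field k] (n m q : ℕ)
    (edge : Fin q → Fin n × Fin m) (hedge : Function.Injective edge) :
    Set.InjOn (laurentPhi k n m)
      ↑(Subalgebra.restrictScalars k (reesAlgebra (edgeIdeal k n m edge))) ∧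
    Subalgebra.map (laurentPhi k n m)
        (Subalgebra.restrictScalars k (reesAlgebra (edgeIdeal k n m edge))) =
      Subalgebra.map (laurentIota k n m) (coneMonomialSubring k n m edge) := by
  constructor
  · exact (laurentPhi_injective k n m).injOn
  · rw [restrictScalars_rees_eq k n m edge]
    simp only [coneMonomialSubring]
    rw [AlgHom.map_adjoin, AlgHom.map_adjoin]
    congr 1
    rw [reesGens, Set.image_union, Set.image_union, Set.union_comm]
    have h2 : {p : Polynomial (MvPolynomial (Sum (Fin n) (Fin m)) k) |
        ∃ e : Fin q, p = Polynomial.C (X (Sum.inl (edge e).1) * X (Sum.inr (edge e).2))} =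
        Set.range fun e : Fin q =>
          Polynomial.C (X (Sum.inl (edge e).1) * X (Sum.inr (edge e).2)) := by
      ext p
      constructor
      · rintro ⟨e, rfl⟩; exact ⟨e, rfl⟩
      · rintro ⟨e, rfl⟩; exact ⟨e, rfl⟩
    rw [h2]
    refine congrArg₂ (· ∪ ·) ?_ ?_
    · rw [← Set.range_comp, ← Set.range_comp]
      apply congrArg Set.range
      funext e
      show laurentPhi k n m
          (Polynomial.C (X (Sum.inl (edge e).1) * X (Sum.inr (edge e).2)) * Polynomial.X) =
        laurentIota k n m
          (Polynomial.C (X (Sum.inl (edge e).1) * X (Sum.inr (edge e).2)))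
      rw [map_mul, laurentPhi_C, laurentPhi_X, laurentIota_C, map_mul, aeval_X, aeval_X,
        mul_mul_mul_comm, ← map_mul, mul_assoc, ← LaurentPolynomial.T_add,
        ← LaurentPolynomial.T_add]
      norm_num
    · rw [← Set.range_comp, ← Set.range_comp]
      apply congrArg Set.range
      funext v
      show laurentPhi k n m (Polynomial.C (X v)) =
        laurentIota k n m (Polynomial.C (X v) * Polynomial.X)
      rw [laurentPhi_C, aeval_X, map_mul, laurentIota_C, laurentIota_X]
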